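/- arXiv:1906.12256 — 3 statements merged into one kernel-verified Lean document; each statement's English description precedes it below -/
import Mathlib

section
/- For h : {-1,1}^E → {0,1} (E finite) and any subset G ⊆ E, the unnormalized spectral mass satisfies ∑_{S : S ∩ G ≠ ∅} ĥ(S)² ≤ 4 · P[Piv_G(h)], where Piv_G(h) is the event that h can be changed by modifying coordinates only inside G. -/
open Finset
open scoped Classical

noncomputable section

/-- Expectation with respect to the uniform product measure on `{-1,1}^E`. -/
def cubeExp {E : Type*} [Fintype E] [DecidableEq E] (f : (E → Bool) → ℝ) : ℝ :=
  (∑ ω : E → Bool, f ω) / 2 ^ Fintype.card E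

/-- The Walsh character `χ_S(ω) = ∏_{i ∈ S} ω(i)` (with `true ↦ +1`, `false ↦ -1`). -/
def walsh {E : Type*} (S : Finset E) (ω : E → Bool) : ℝ :=
  ∏ i ∈ S, (if ω i then (1 : ℝ) else -1)

/-- The Fourier–Walsh coefficient `ĥ(S) = E[h χ_S]`. -/
def walshCoeff {E : Type*} [Fintype E] [DecidableEq E]
    (h : (E → Bool) → ℝ) (S : Finset E) : ℝ :=
  cubeExp (fun ω => h ω * walsh S ω)

/-- Probability (under the uniform measure) of a set of configurations. -/
def probOf {E : Type*} [Fintype E] [DecidableEq E] (A : (E → Bool) → Prop) : ℝ :=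
  cubeExp (fun ω => if A ω then 1 else 0)

/-- `Piv_G(h)`: the event that `h` can be changed by modifying coordinates only inside `G`. -/
def pivotal {E : Type*} (G : Finset E) (h : (E → Bool) → ℝ) (ω : E → Bool) : Prop :=
  ∃ ω' : E → Bool, (∀ i, i ∉ G → ω' i = ω i) ∧ h ω' ≠ h ω

section SpectralAux

set_option linter.unusedSectionVars false

variable {E : Type*} [Fintype E] [DecidableEq E]

lemma card_fun_bool' : Fintype.card (E → Bool) = 2 ^ Fintype.card E := by
  simp [Fintype.card_fun]

lemma cubeExp_const' (c : ℝ) : cubeExp (fun _ : E → Bool => c) = c := by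
  have h2 : (0:ℝ) < 2 ^ Fintype.card E := by positivity
  rw [cubeExp, Finset.sum_const, Finset.card_univ, card_fun_bool', nsmul_eq_mul]
  push_cast
  field_simp

lemma cubeExp_mono' {f g : (E → Bool) → ℝ} (hfg : ∀ ω, f ω ≤ g ω) :
    cubeExp f ≤ cubeExp g := by
  have h2 : (0:ℝ) < 2 ^ Fintype.card E := by positivity
  exact div_le_div_of_nonneg_right (Finset.sum_le_sum fun ω _ => hfg ω) h2.le

lemma sum_walsh_mul_walsh (ω ω' : E → Bool) :
    ∑ S : Finset E, walsh S ω * walsh S ω'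
      = if ω = ω' then (2:ℝ) ^ Fintype.card E else 0 := by
  have key : ∀ S : Finset E, walsh S ω * walsh S ω'
      = ∏ i ∈ S, (if ω i = ω' i then (1:ℝ) else -1) := by
    intro S
    rw [walsh, walsh, ← Finset.prod_mul_distrib]
    exact Finset.prod_congr rfl fun i _ => by
      cases hω : ω i <;> cases hω' : ω' i <;> norm_num
  simp only [key]
  have hp := Finset.prod_add (fun i : E => if ω i = ω' i then (1:ℝ) else -1)
      (fun _ => (1:ℝ)) Finset.univ
  simp only [Finset.prod_const_one, mul_one, Finset.powerset_univ] at hp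
  rw [← hp]
  by_cases hωω : ω = ω'
  · subst hωω
    simp [Finset.prod_const, Finset.card_univ]
    norm_num
  · obtain ⟨i, hi⟩ : ∃ i, ω i ≠ ω' i := by
      by_contra hc
      push_neg at hc
      exact hωω (funext hc)
    rw [if_neg hωω]
    exact Finset.prod_eq_zero (Finset.mem_univ i) (by simp [hi])

/-- Fourier inversion. -/
lemma walsh_inversion (h : (E → Bool) → ℝ) (ω₀ : E → Bool) :
    ∑ S : Finset E, walshCoeff h S * walsh S ω₀ = h ω₀ := by
  have h2 : (0:ℝ) < 2 ^ Fintype.card E := by positivity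
  simp only [walshCoeff, cubeExp, div_mul_eq_mul_div, ← Finset.sum_div,
    Finset.sum_mul]
  rw [Finset.sum_comm]
  have : ∀ ω : E → Bool, ∑ S : Finset E, h ω * walsh S ω * walsh S ω₀
      = h ω * (if ω = ω₀ then (2:ℝ) ^ Fintype.card E else 0) := by
    intro ω
    rw [← sum_walsh_mul_walsh ω ω₀, Finset.mul_sum]
    simp [mul_assoc]
  simp only [this, mul_ite, mul_zero]
  rw [Finset.sum_ite_eq' Finset.univ ω₀ (fun ω => h ω * (2:ℝ) ^ Fintype.card E)]
  simp

/-- Parseval. -/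
lemma walsh_parseval (f : (E → Bool) → ℝ) :
    cubeExp (fun ω => f ω * f ω) = ∑ S : Finset E, walshCoeff f S ^ 2 := by
  have : ∀ ω, f ω * f ω = f ω * ∑ S : Finset E, walshCoeff f S * walsh S ω := by
    intro ω; rw [walsh_inversion]
  simp only [this]
  rw [cubeExp]
  have : ∀ ω, f ω * ∑ S : Finset E, walshCoeff f S * walsh S ω
      = ∑ S : Finset E, walshCoeff f S * (f ω * walsh S ω) := by
    intro ω; rw [Finset.mul_sum]; exact Finset.sum_congr rfl fun S _ => by ring
  simp only [this]
  rw [Finset.sum_comm, Finset.sum_div]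
  exact Finset.sum_congr rfl fun S _ => by
    rw [← Finset.mul_sum, mul_div_assoc, ← cubeExp, ← walshCoeff, sq]

/-- Override the `G`-coordinates of `ω` by those of `σ`. -/
def ovr (G : Finset E) (ω σ : E → Bool) : E → Bool := fun i => if i ∈ G then σ i else ω i

lemma ovr_ovr (G : Finset E) (ω σ : E → Bool) : ovr G (ovr G ω σ) (ovr G σ ω) = ω := by
  funext i
  by_cases hi : i ∈ G <;> simp [ovr, hi]

lemma walsh_ovr (G : Finset E) (S : Finset E) (ω σ : E → Bool) :
    walsh S (ovr G ω σ) = walsh (S \ G) ω * walsh (S ∩ G) σ := by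
  rw [walsh, walsh, walsh]
  conv_lhs => rw [← Finset.sdiff_union_inter S G]
  rw [Finset.prod_union (Finset.disjoint_sdiff_inter S G)]
  congr 1
  · exact Finset.prod_congr rfl fun i hi => by
      simp [ovr, (Finset.mem_sdiff.mp hi).2]
  · exact Finset.prod_congr rfl fun i hi => by
      simp [ovr, (Finset.mem_inter.mp hi).2]

lemma walsh_update_flip (S : Finset E) (i : E) (hi : i ∈ S) (σ : E → Bool) :
    walsh S (Function.update σ i (!σ i)) = - walsh S σ := by
  rw [walsh, walsh, ← Finset.mul_prod_erase _ _ hi, ← Finset.mul_prod_erase _ _ hi]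
  have h1 : (∏ j ∈ S.erase i, (if Function.update σ i (!σ i) j then (1:ℝ) else -1))
      = ∏ j ∈ S.erase i, (if σ j then (1:ℝ) else -1) := by
    refine Finset.prod_congr rfl fun j hj => ?_
    rw [Function.update_of_ne (Finset.ne_of_mem_erase hj)]
  rw [h1, Function.update_self]
  cases hσ : σ i <;> simp

lemma sum_walsh_eq_zero {S : Finset E} (hS : S.Nonempty) :
    ∑ σ : E → Bool, walsh S σ = 0 := by
  obtain ⟨i, hi⟩ := hS
  have hinv : Function.Involutive (fun σ : E → Bool => Function.update σ i (!σ i)) := by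
    intro σ
    funext j
    by_cases hj : j = i
    · subst hj; simp
    · simp [Function.update_of_ne hj]
  have := hinv.bijective.sum_comp (fun σ => walsh S σ)
  have h2 : ∑ σ : E → Bool, walsh S (Function.update σ i (!σ i))
      = ∑ σ : E → Bool, - walsh S σ := by
    exact Finset.sum_congr rfl fun σ _ => walsh_update_flip S i hi σ
  rw [h2, Finset.sum_neg_distrib] at this
  linarith

lemma double_sum_swap (G : Finset E) (h : (E → Bool) → ℝ) (S : Finset E) :
    ∑ ω : E → Bool, ∑ σ : E → Bool, h (ovr G ω σ) * walsh S ω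
    = (∑ ω : E → Bool, h ω * walsh (S \ G) ω) * (∑ σ : E → Bool, walsh (S ∩ G) σ) := by
  have hΦ : Function.Involutive
      (fun p : (E → Bool) × (E → Bool) => (ovr G p.1 p.2, ovr G p.2 p.1)) := by
    intro p
    exact Prod.ext (ovr_ovr G p.1 p.2) (ovr_ovr G p.2 p.1)
  have e1 : ∑ ω : E → Bool, ∑ σ : E → Bool, h (ovr G ω σ) * walsh S ω
      = ∑ p : (E → Bool) × (E → Bool), h (ovr G p.1 p.2) * walsh S p.1 :=
    (Fintype.sum_prod_type
      (fun p : (E → Bool) × (E → Bool) => h (ovr G p.1 p.2) * walsh S p.1)).symm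
  have e2 : ∑ p : (E → Bool) × (E → Bool), h (ovr G p.1 p.2) * walsh S p.1
      = ∑ p : (E → Bool) × (E → Bool),
          h (ovr G (ovr G p.1 p.2) (ovr G p.2 p.1)) * walsh S (ovr G p.1 p.2) :=
    (hΦ.bijective.sum_comp
      (fun p : (E → Bool) × (E → Bool) => h (ovr G p.1 p.2) * walsh S p.1)).symm
  have e3 : ∑ p : (E → Bool) × (E → Bool),
          h (ovr G (ovr G p.1 p.2) (ovr G p.2 p.1)) * walsh S (ovr G p.1 p.2)
      = ∑ p : (E → Bool) × (E → Bool), h p.1 * walsh S (ovr G p.1 p.2) := by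
    simp only [ovr_ovr]
  have e4 : ∑ p : (E → Bool) × (E → Bool), h p.1 * walsh S (ovr G p.1 p.2)
      = ∑ ω : E → Bool, ∑ σ : E → Bool, (h ω * walsh (S \ G) ω) * walsh (S ∩ G) σ := by
    rw [Fintype.sum_prod_type
      (fun p : (E → Bool) × (E → Bool) => h p.1 * walsh S (ovr G p.1 p.2))]
    exact Finset.sum_congr rfl fun ω _ => Finset.sum_congr rfl fun σ _ => by
      rw [walsh_ovr]; ring
  rw [e1, e2, e3, e4, ← Finset.sum_mul_sum]

/-- The Walsh coefficients of the conditional expectation onto coordinates outside `G`. -/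
lemma walshCoeff_cond (G : Finset E) (h : (E → Bool) → ℝ) (S : Finset E) :
    walshCoeff (fun ω => cubeExp (fun σ => h (ovr G ω σ))) S
      = if (S ∩ G).Nonempty then 0 else walshCoeff h S := by
  have h2 : (0:ℝ) < 2 ^ Fintype.card E := by positivity
  have step : walshCoeff (fun ω => cubeExp (fun σ => h (ovr G ω σ))) S
      = ((∑ ω : E → Bool, h ω * walsh (S \ G) ω)
          * (∑ σ : E → Bool, walsh (S ∩ G) σ))
        / 2 ^ Fintype.card E / 2 ^ Fintype.card E := by
    rw [walshCoeff, cubeExp]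
    have e : ∀ ω : E → Bool, (cubeExp fun σ => h (ovr G ω σ)) * walsh S ω
        = (∑ σ : E → Bool, h (ovr G ω σ) * walsh S ω) / 2 ^ Fintype.card E := by
      intro ω
      rw [cubeExp, div_mul_eq_mul_div, Finset.sum_mul]
    simp only [e]
    rw [← Finset.sum_div, double_sum_swap G h S]
  by_cases hSG : (S ∩ G).Nonempty
  · rw [step, sum_walsh_eq_zero hSG, if_pos hSG]
    simp
  · rw [step, if_neg hSG]
    rw [Finset.not_nonempty_iff_eq_empty] at hSG
    have hS : S \ G = S := by
      rw [Finset.sdiff_eq_self_iff_disjoint, Finset.disjoint_iff_inter_eq_empty, hSG]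
    have hw : ∀ σ : E → Bool, walsh (S ∩ G) σ = 1 := by
      intro σ; rw [hSG, walsh, Finset.prod_empty]
    simp only [hw, hS, Finset.sum_const, Finset.card_univ, card_fun_bool', nsmul_eq_mul,
      mul_one]
    rw [walshCoeff, cubeExp]
    push_cast
    field_simp

end SpectralAux

/-- The spectral mass of the sets intersecting `G` is at most `4 P[Piv_G(h)]`. -/
theorem spectral_mass_inter_le_pivotal {E : Type*} [Fintype E] [DecidableEq E]
    (h : (E → Bool) → ℝ) (h01 : ∀ ω, h ω = 0 ∨ h ω = 1) (G : Finset E) :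
    ∑ S ∈ Finset.univ.filter (fun S : Finset E => (S ∩ G).Nonempty),
        walshCoeff h S ^ 2
      ≤ 4 * probOf (pivotal G h) := by
  classical
  have h2 : (0:ℝ) < 2 ^ Fintype.card E := by positivity
  set hG : (E → Bool) → ℝ := fun ω => cubeExp (fun σ => h (ovr G ω σ)) with hGdef
  set D : (E → Bool) → ℝ := fun ω => h ω - hG ω with Ddef
  -- Walsh coefficients of D
  have hDcoeff : ∀ S : Finset E,
      walshCoeff D S = if (S ∩ G).Nonempty then walshCoeff h S else 0 := by
    intro S
    have hlin : walshCoeff D S = walshCoeff h S - walshCoeff hG S := by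
      simp only [walshCoeff, cubeExp, Ddef, sub_mul, Finset.sum_sub_distrib, sub_div]
    rw [hlin, hGdef, walshCoeff_cond G h S]
    by_cases hSG : (S ∩ G).Nonempty <;> simp [hSG]
  -- the spectral mass equals E[D²]
  have hmass : ∑ S ∈ Finset.univ.filter (fun S : Finset E => (S ∩ G).Nonempty),
      walshCoeff h S ^ 2 = cubeExp (fun ω => D ω * D ω) := by
    rw [walsh_parseval D]
    rw [Finset.sum_filter]
    refine Finset.sum_congr rfl fun S _ => ?_
    rw [hDcoeff S]
    by_cases hSG : (S ∩ G).Nonempty <;> simp [hSG]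
  -- bounds on hG
  have hG01 : ∀ ω, 0 ≤ hG ω ∧ hG ω ≤ 1 := by
    intro ω
    constructor
    · apply div_nonneg _ (le_of_lt h2)
      refine Finset.sum_nonneg fun σ _ => ?_
      rcases h01 (ovr G ω σ) with h0 | h0 <;> simp [h0]
    · have := cubeExp_const' (E := E) 1
      rw [← this]
      apply cubeExp_mono'
      intro σ
      rcases h01 (ovr G ω σ) with h0 | h0 <;> simp [h0]
  -- pointwise bound
  have hpt : ∀ ω, D ω * D ω ≤ (if pivotal G h ω then (1:ℝ) else 0) := by
    intro ω
    by_cases hpiv : pivotal G h ω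
    · rw [if_pos hpiv]
      obtain ⟨hg0, hg1⟩ := hG01 ω
      simp only [Ddef]
      rcases h01 ω with h0 | h1
      · rw [h0]; nlinarith
      · rw [h1]; nlinarith
    · rw [if_neg hpiv]
      have hconst : ∀ σ : E → Bool, h (ovr G ω σ) = h ω := by
        intro σ
        by_contra hne
        exact hpiv ⟨ovr G ω σ, fun i hi => by simp [ovr, hi], hne⟩
      have : hG ω = h ω := by
        simp only [hGdef, hconst]
        exact cubeExp_const' (h ω)
      simp [Ddef, this]
  have hprob : cubeExp (fun ω => D ω * D ω) ≤ probOf (pivotal G h) :=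
    cubeExp_mono' hpt
  have hnn : 0 ≤ probOf (pivotal G h) := by
    apply div_nonneg _ (le_of_lt h2)
    refine Finset.sum_nonneg fun ω _ => ?_
    split <;> norm_num
  rw [hmass]
  linarith
end
end

section
/- For h : {-1,1}^E → {0,1} (E finite) and any subset G ⊆ E, ∑_{S : ∅ ≠ S ⊆ G} ĥ(S)² ≤ 4 · P[Piv_G(h)]², where Piv_G(h) is the event that h can be changed by modifying coordinates only inside G. -/
open Finset
open scoped Classical

noncomputable section

set_option linter.unusedSectionVars false

namespace SpectralAux

variable {E : Type*} [Fintype E] [DecidableEq E]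

/-- overwrite `ω` on `G` by `x`. -/
def ov (G : Finset E) (ω x : E → Bool) : E → Bool := fun i => if i ∈ G then x i else ω i

/-- indicator of the pivotal event -/
def pivInd (G : Finset E) (h : (E → Bool) → ℝ) (ω : E → Bool) : ℝ :=
  if pivotal G h ω then 1 else 0

/-- the Walsh coefficient of `h` restricted to the fiber of `ω` -/
def fib (G : Finset E) (h : (E → Bool) → ℝ) (S : Finset E) (ω : E → Bool) : ℝ :=
  walshCoeff (fun x => h (ov G ω x)) S

lemma pivInd_cases (G : Finset E) (h : (E → Bool) → ℝ) (ω : E → Bool) :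
    pivInd G h ω = 0 ∨ pivInd G h ω = 1 := by
  unfold pivInd; by_cases hp : pivotal G h ω <;> simp [hp]

lemma pivInd_nonneg (G : Finset E) (h : (E → Bool) → ℝ) (ω : E → Bool) :
    0 ≤ pivInd G h ω := by
  rcases pivInd_cases G h ω with hp | hp <;> rw [hp] <;> norm_num

lemma twopow_pos : (0:ℝ) < 2 ^ Fintype.card E := by positivity

lemma cubeExp_nonneg {f : (E → Bool) → ℝ} (hf : ∀ ω, 0 ≤ f ω) : 0 ≤ cubeExp f := by
  unfold cubeExp
  apply div_nonneg _ (le_of_lt twopow_pos)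
  exact Finset.sum_nonneg fun ω _ => hf ω

lemma cubeExp_mono {f g : (E → Bool) → ℝ} (hfg : ∀ ω, f ω ≤ g ω) : cubeExp f ≤ cubeExp g := by
  unfold cubeExp
  exact div_le_div_of_nonneg_right (Finset.sum_le_sum fun ω _ => hfg ω) (le_of_lt twopow_pos)

lemma cubeExp_sum {ι : Type*} (A : Finset ι) (F : ι → (E → Bool) → ℝ) :
    cubeExp (fun ω => ∑ s ∈ A, F s ω) = ∑ s ∈ A, cubeExp (F s) := by
  unfold cubeExp
  rw [Finset.sum_comm, Finset.sum_div]

lemma cubeExp_const_mul (c : ℝ) (f : (E → Bool) → ℝ) :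
    cubeExp (fun ω => c * f ω) = c * cubeExp f := by
  unfold cubeExp
  rw [← Finset.mul_sum, mul_div_assoc]

/-- flip one coordinate kills a nonempty character sum -/
lemma sum_walsh {S : Finset E} (hS : S ≠ ∅) : ∑ x : E → Bool, walsh S x = 0 := by
  obtain ⟨i₀, hi₀⟩ := Finset.nonempty_iff_ne_empty.mpr hS
  set g : (E → Bool) → (E → Bool) := fun x => Function.update x i₀ (!x i₀) with hg
  have hinv : Function.Involutive g := by
    intro x
    funext i
    by_cases hi : i = i₀ <;> simp [hg, hi, Function.update]
  have key : ∀ x, walsh S (g x) = - walsh S x := by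
    intro x
    unfold walsh
    rw [← Finset.mul_prod_erase S _ hi₀, ← Finset.mul_prod_erase S _ hi₀]
    have h1 : ∀ i ∈ S.erase i₀,
        (if (g x) i then (1:ℝ) else -1) = (if x i then (1:ℝ) else -1) := by
      intro i hi
      have hne : i ≠ i₀ := Finset.ne_of_mem_erase hi
      simp [hg, Function.update, hne]
    rw [Finset.prod_congr rfl h1]
    have h2 : (if (g x) i₀ then (1:ℝ) else -1) = -(if x i₀ then (1:ℝ) else -1) := by
      cases hx : x i₀ <;> simp [hg, hx]
    rw [h2]
    ring
  have hb := hinv.bijective.sum_comp (walsh S)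
  have h2 : ∑ x : E → Bool, walsh S (g x) = - ∑ x : E → Bool, walsh S x := by
    rw [← Finset.sum_neg_distrib]
    exact Finset.sum_congr rfl fun x _ => key x
  rw [h2] at hb
  linarith

lemma ov_eq_off (G : Finset E) (ω x : E → Bool) : ∀ i, i ∉ G → (ov G ω x) i = ω i := by
  intro i hi; simp [ov, hi]

/-- double averaging over the fiber equals the full average -/
lemma cubeExp_ov (G : Finset E) (F : (E → Bool) → ℝ) :
    cubeExp (fun ω => cubeExp (fun x => F (ov G ω x))) = cubeExp F := by
  set g : ((E → Bool) × (E → Bool)) → ((E → Bool) × (E → Bool)) :=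
    fun p => (ov G p.2 p.1, ov G p.1 p.2) with hg
  have hinv : Function.Involutive g := by
    intro p
    ext i
    · show (if i ∈ G then (ov G p.2 p.1) i else (ov G p.1 p.2) i) = p.1 i
      by_cases hi : i ∈ G <;> simp [ov, hi]
    · show (if i ∈ G then (ov G p.1 p.2) i else (ov G p.2 p.1) i) = p.2 i
      by_cases hi : i ∈ G <;> simp [ov, hi]
  have key : ∑ p : (E → Bool) × (E → Bool), F (ov G p.1 p.2)
      = ∑ p : (E → Bool) × (E → Bool), F p.2 := by
    have heq : ∀ p : (E → Bool) × (E → Bool),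
        F (ov G (g p).1 (g p).2) = F p.2 := by
      intro p
      congr 1
      funext i
      show (if i ∈ G then (ov G p.1 p.2) i else (ov G p.2 p.1) i) = p.2 i
      by_cases hi : i ∈ G <;> simp [ov, hi]
    calc ∑ p : (E → Bool) × (E → Bool), F (ov G p.1 p.2)
        = ∑ p : (E → Bool) × (E → Bool), F (ov G (g p).1 (g p).2) :=
          (hinv.bijective.sum_comp (fun p => F (ov G p.1 p.2))).symm
      _ = ∑ p : (E → Bool) × (E → Bool), F p.2 :=
          Finset.sum_congr rfl fun p _ => heq p
  have key2 : ∑ ω : E → Bool, ∑ x : E → Bool, F (ov G ω x)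
      = (2:ℝ) ^ Fintype.card E * ∑ σ : E → Bool, F σ := by
    have hA := Fintype.sum_prod_type
      (f := fun p : (E → Bool) × (E → Bool) => F (ov G p.1 p.2))
    have hB := Fintype.sum_prod_type (f := fun p : (E → Bool) × (E → Bool) => F p.2)
    calc ∑ ω : E → Bool, ∑ x : E → Bool, F (ov G ω x)
        = ∑ p : (E → Bool) × (E → Bool), F (ov G p.1 p.2) := hA.symm
      _ = ∑ p : (E → Bool) × (E → Bool), F p.2 := key
      _ = ∑ _ω : E → Bool, ∑ σ : E → Bool, F σ := hB
      _ = (2:ℝ) ^ Fintype.card E * ∑ σ : E → Bool, F σ := by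
          rw [Finset.sum_const, Finset.card_univ, nsmul_eq_mul]
          congr 1
          rw [Fintype.card_fun]
          push_cast
          simp
  simp only [cubeExp]
  rw [← Finset.sum_div, key2]
  have hN : ((2:ℝ) ^ Fintype.card E) ≠ 0 := ne_of_gt twopow_pos
  field_simp

/-- orthogonality kernel -/
lemma walsh_kernel (x y : E → Bool) :
    ∑ S : Finset E, walsh S x * walsh S y
      = if x = y then (2:ℝ) ^ Fintype.card E else 0 := by
  have step : ∑ S : Finset E, walsh S x * walsh S y
      = ∏ i : E, ((if x i then (1:ℝ) else -1) * (if y i then 1 else -1) + 1) := by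
    rw [Finset.prod_add, Finset.powerset_univ]
    refine Finset.sum_congr rfl fun S _ => ?_
    rw [Finset.prod_const_one, mul_one]
    unfold walsh
    exact Finset.prod_mul_distrib.symm
  rw [step]
  by_cases hxy : x = y
  · subst hxy
    rw [if_pos rfl]
    have hfac : ∀ i : E, ((if x i then (1:ℝ) else -1) * (if x i then 1 else -1) + 1) = 2 := by
      intro i; cases hx : x i <;> norm_num [hx]
    rw [Finset.prod_congr rfl (fun i _ => hfac i), Finset.prod_const, Finset.card_univ]
  · rw [if_neg hxy]
    obtain ⟨i, hi⟩ : ∃ i, x i ≠ y i := by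
      by_contra hc
      push_neg at hc
      exact hxy (funext hc)
    apply Finset.prod_eq_zero (Finset.mem_univ i)
    cases hx : x i <;> cases hy : y i <;> simp [hx, hy] at hi ⊢

/-- Parseval -/
lemma parseval (f : (E → Bool) → ℝ) :
    ∑ S : Finset E, (walshCoeff f S) ^ 2 = cubeExp (fun ω => f ω ^ 2) := by
  have key : ∑ S : Finset E, (∑ x : E → Bool, f x * walsh S x) ^ 2
      = (2:ℝ) ^ Fintype.card E * ∑ x : E → Bool, f x ^ 2 := by
    have e1 : ∀ S : Finset E, (∑ x : E → Bool, f x * walsh S x) ^ 2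
        = ∑ x : E → Bool, ∑ y : E → Bool, (f x * f y) * (walsh S x * walsh S y) := by
      intro S
      rw [sq, Finset.sum_mul_sum]
      exact Finset.sum_congr rfl fun x _ => Finset.sum_congr rfl fun y _ => by ring
    rw [Finset.sum_congr rfl fun S _ => e1 S, Finset.sum_comm]
    have e2 : ∀ x : E → Bool, ∑ S : Finset E, ∑ y : E → Bool,
        (f x * f y) * (walsh S x * walsh S y)
        = (2:ℝ) ^ Fintype.card E * f x ^ 2 := by
      intro x
      rw [Finset.sum_comm]
      have e3 : ∀ y : E → Bool, ∑ S : Finset E, (f x * f y) * (walsh S x * walsh S y)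
          = if x = y then (f x * f y) * ((2:ℝ) ^ Fintype.card E) else 0 := by
        intro y
        rw [← Finset.mul_sum, walsh_kernel, mul_ite, mul_zero]
      rw [Finset.sum_congr rfl fun y _ => e3 y,
        Finset.sum_ite_eq (Finset.univ : Finset (E → Bool)) x
          (fun y => (f x * f y) * ((2:ℝ) ^ Fintype.card E))]
      rw [if_pos (Finset.mem_univ x)]
      ring
    rw [Finset.sum_congr rfl fun x _ => e2 x, ← Finset.mul_sum]
  simp only [walshCoeff, cubeExp]
  have e4 : ∑ S : Finset E, ((∑ x : E → Bool, f x * walsh S x) / (2:ℝ) ^ Fintype.card E) ^ 2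
      = (∑ S : Finset E, (∑ x : E → Bool, f x * walsh S x) ^ 2)
          / ((2:ℝ) ^ Fintype.card E) ^ 2 := by
    rw [Finset.sum_div]
    exact Finset.sum_congr rfl fun S _ => div_pow _ _ _
  rw [e4, key]
  have hN : ((2:ℝ) ^ Fintype.card E) ≠ 0 := ne_of_gt twopow_pos
  field_simp

/-- Step A : the Walsh coefficient only sees pivotal fibers -/
lemma stepA (h : (E → Bool) → ℝ) (G : Finset E) {S : Finset E}
    (hSne : S ≠ ∅) (hSG : S ⊆ G) :
    walshCoeff h S = cubeExp (fun ω => pivInd G h ω * fib G h S ω) := by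
  have hw : ∀ ω x : E → Bool, walsh S (ov G ω x) = walsh S x := by
    intro ω x
    unfold walsh
    refine Finset.prod_congr rfl fun i hi => ?_
    have hig : i ∈ G := hSG hi
    simp [ov, hig]
  have hb0 : ∀ ω, ¬ pivotal G h ω → fib G h S ω = 0 := by
    intro ω hnp
    have hconst : ∀ x : E → Bool, h (ov G ω x) = h ω := by
      intro x
      by_contra hne
      exact hnp ⟨ov G ω x, ov_eq_off G ω x, hne⟩
    have hbw : fib G h S ω = cubeExp (fun x => h ω * walsh S x) := by
      show cubeExp (fun x => h (ov G ω x) * walsh S x) = _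
      congr 1
      funext x
      rw [hconst x]
    rw [hbw]
    unfold cubeExp
    rw [← Finset.mul_sum, sum_walsh hSne]
    simp
  have heq : (fun ω => pivInd G h ω * fib G h S ω) = fun ω => fib G h S ω := by
    funext ω
    by_cases hp : pivotal G h ω
    · simp [pivInd, hp]
    · simp [pivInd, hp, hb0 ω hp]
  rw [heq]
  have hbrw : (fun ω => fib G h S ω)
      = fun ω => cubeExp (fun x => (fun σ => h σ * walsh S σ) (ov G ω x)) := by
    funext ω
    show cubeExp (fun x => h (ov G ω x) * walsh S x) = _
    congr 1
    funext x
    show h (ov G ω x) * walsh S x = h (ov G ω x) * walsh S (ov G ω x)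
    rw [hw ω x]
  rw [hbrw, cubeExp_ov G (fun σ => h σ * walsh S σ)]
  rfl

/-- Step B : Cauchy–Schwarz against the pivotal indicator -/
lemma stepB (h : (E → Bool) → ℝ) (G : Finset E) (S : Finset E) :
    (cubeExp (fun ω => pivInd G h ω * fib G h S ω)) ^ 2
      ≤ cubeExp (pivInd G h) * cubeExp (fun ω => pivInd G h ω * fib G h S ω ^ 2) := by
  have cs := Finset.sum_mul_sq_le_sq_mul_sq (Finset.univ : Finset (E → Bool))
    (fun ω => pivInd G h ω) (fun ω => pivInd G h ω * fib G h S ω)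
  have e1 : ∑ ω : E → Bool, pivInd G h ω * (pivInd G h ω * fib G h S ω)
      = ∑ ω : E → Bool, pivInd G h ω * fib G h S ω := by
    refine Finset.sum_congr rfl fun ω _ => ?_
    rcases pivInd_cases G h ω with hp | hp <;> rw [hp] <;> ring
  have e2 : ∑ ω : E → Bool, (pivInd G h ω) ^ 2 = ∑ ω : E → Bool, pivInd G h ω := by
    refine Finset.sum_congr rfl fun ω _ => ?_
    rcases pivInd_cases G h ω with hp | hp <;> rw [hp] <;> norm_num
  have e3 : ∑ ω : E → Bool, (pivInd G h ω * fib G h S ω) ^ 2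
      = ∑ ω : E → Bool, pivInd G h ω * fib G h S ω ^ 2 := by
    refine Finset.sum_congr rfl fun ω _ => ?_
    rcases pivInd_cases G h ω with hp | hp <;> rw [hp] <;> ring
  rw [e1, e2, e3] at cs
  simp only [cubeExp]
  rw [div_pow, div_mul_div_comm, ← sq]
  gcongr

/-- Step C : fiber variance bound -/
lemma stepC (h : (E → Bool) → ℝ) (h01 : ∀ ω, h ω = 0 ∨ h ω = 1) (G : Finset E)
    (ω : E → Bool) :
    ∑ S ∈ Finset.univ.filter (fun S : Finset E => S ≠ ∅ ∧ S ⊆ G), fib G h S ω ^ 2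
      ≤ 1 / 4 := by
  set T : Finset (Finset E) := Finset.univ.filter (fun S : Finset E => S ≠ ∅ ∧ S ⊆ G) with hT
  set f : (E → Bool) → ℝ := fun x => h (ov G ω x) with hf
  have hfsq : ∀ x, f x ^ 2 = f x := by
    intro x; rcases h01 (ov G ω x) with hx | hx <;> simp [hf, hx]
  have hsub : T ⊆ Finset.univ.erase ∅ := by
    intro S hS
    rw [hT, Finset.mem_filter] at hS
    exact Finset.mem_erase.mpr ⟨hS.2.1, Finset.mem_univ S⟩
  have h1 : ∑ S ∈ T, fib G h S ω ^ 2 ≤ ∑ S ∈ Finset.univ.erase ∅, fib G h S ω ^ 2 :=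
    Finset.sum_le_sum_of_subset_of_nonneg hsub fun S _ _ => sq_nonneg _
  have h2 : ∑ S ∈ Finset.univ.erase ∅, fib G h S ω ^ 2
      = (∑ S : Finset E, fib G h S ω ^ 2) - fib G h ∅ ω ^ 2 := by
    rw [← Finset.add_sum_erase Finset.univ (fun S => fib G h S ω ^ 2) (Finset.mem_univ ∅)]
    ring
  have h3 : ∑ S : Finset E, fib G h S ω ^ 2 = cubeExp f := by
    have hp := parseval f
    have : ∀ S : Finset E, fib G h S ω = walshCoeff f S := fun S => rfl
    rw [Finset.sum_congr rfl fun S _ => by rw [this S], hp]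
    congr 1
    funext x
    exact hfsq x
  have h4 : fib G h ∅ ω = cubeExp f := by
    show cubeExp (fun x => f x * walsh ∅ x) = cubeExp f
    congr 1
    funext x
    simp [walsh]
  have hle : ∑ S ∈ T, fib G h S ω ^ 2 ≤ cubeExp f - (cubeExp f) ^ 2 := by
    calc ∑ S ∈ T, fib G h S ω ^ 2 ≤ ∑ S ∈ Finset.univ.erase ∅, fib G h S ω ^ 2 := h1
      _ = (∑ S : Finset E, fib G h S ω ^ 2) - fib G h ∅ ω ^ 2 := h2
      _ = cubeExp f - (cubeExp f) ^ 2 := by rw [h3, h4]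
  nlinarith [sq_nonneg (cubeExp f - 1/2)]

end SpectralAux

open SpectralAux

/-- The spectral mass of the nonempty sets contained in `G` is at most `4 P[Piv_G(h)]²`. -/
theorem spectral_mass_subset_le_pivotal_sq {E : Type*} [Fintype E] [DecidableEq E]
    (h : (E → Bool) → ℝ) (h01 : ∀ ω, h ω = 0 ∨ h ω = 1) (G : Finset E) :
    ∑ S ∈ Finset.univ.filter (fun S : Finset E => S ≠ ∅ ∧ S ⊆ G),
        walshCoeff h S ^ 2
      ≤ 4 * probOf (pivotal G h) ^ 2 := by
  classical
  have hP : probOf (pivotal G h) = cubeExp (pivInd G h) := rfl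
  have hPnonneg : 0 ≤ cubeExp (pivInd G h) := cubeExp_nonneg (pivInd_nonneg G h)
  calc ∑ S ∈ Finset.univ.filter (fun S : Finset E => S ≠ ∅ ∧ S ⊆ G), walshCoeff h S ^ 2
      = ∑ S ∈ Finset.univ.filter (fun S : Finset E => S ≠ ∅ ∧ S ⊆ G),
          (cubeExp (fun ω => pivInd G h ω * fib G h S ω)) ^ 2 := by
        refine Finset.sum_congr rfl fun S hS => ?_
        rw [Finset.mem_filter] at hS
        rw [stepA h G hS.2.1 hS.2.2]
    _ ≤ ∑ S ∈ Finset.univ.filter (fun S : Finset E => S ≠ ∅ ∧ S ⊆ G),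
          cubeExp (pivInd G h) * cubeExp (fun ω => pivInd G h ω * fib G h S ω ^ 2) :=
        Finset.sum_le_sum fun S _ => stepB h G S
    _ = cubeExp (pivInd G h) * cubeExp (fun ω => pivInd G h ω *
          ∑ S ∈ Finset.univ.filter (fun S : Finset E => S ≠ ∅ ∧ S ⊆ G), fib G h S ω ^ 2) := by
        rw [← Finset.mul_sum]
        congr 1
        rw [← cubeExp_sum]
        congr 1
        funext ω
        rw [Finset.mul_sum]
    _ ≤ cubeExp (pivInd G h) * cubeExp (fun ω => pivInd G h ω * (1/4)) := by
        apply mul_le_mul_of_nonneg_left _ hPnonneg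
        apply cubeExp_mono
        intro ω
        exact mul_le_mul_of_nonneg_left (stepC h h01 G ω) (pivInd_nonneg G h ω)
    _ = cubeExp (pivInd G h) * (cubeExp (pivInd G h) * (1/4)) := by
        congr 1
        have hc : (fun ω => pivInd G h ω * (1/4)) = fun ω => (1/4) * pivInd G h ω := by
          funext ω; ring
        rw [hc, cubeExp_const_mul]
        ring
    _ ≤ 4 * probOf (pivotal G h) ^ 2 := by
        rw [hP]
        nlinarith [hPnonneg]
end
end

section
/- Let n ∈ ℕ and let x, y be random variables in {0,1}^n with x_i ≥ y_i for all i; set X = ∑ x_i and Y = ∑ y_i. Suppose there is a ∈ (0,1] such that for every j and every I ⊆ {1,…,n}∖{j}, P[y_j = 1 | y_i = 0 ∀ i ∈ I] ≥ a · P[x_j = 1 | y_i = 0 ∀ i ∈ I]. Then P[Y = 0 | X > 0] ≤ (1/a) · E[exp(−aX/e) | X > 0]. -/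
open MeasureTheory ProbabilityTheory Finset

section gps_aux

/-- key scalar bound: `v ≤ exp((1 - e⁻¹) v)` for `v ≥ 0`. -/
lemma gps_aux1 (v : ℝ) (hv : 0 ≤ v) : v ≤ Real.exp ((1 - Real.exp (-1)) * v) := by
  have hβ : (1:ℝ)/2 ≤ 1 - Real.exp (-1) := by
    have h2 : Real.exp (-1) ≤ 1/2 := by
      rw [Real.exp_neg]
      rw [inv_le_comm₀ (Real.exp_pos 1) (by norm_num)]
      have := Real.add_one_le_exp (1:ℝ)
      linarith
    linarith
  set β : ℝ := 1 - Real.exp (-1) with hβdef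
  have h1 : Real.exp (β * v) = Real.exp (β * v / 2) ^ 2 := by
    rw [← Real.exp_nat_mul]
    congr 1
    push_cast
    ring
  have h2 : (1 + β * v / 2) ≤ Real.exp (β * v / 2) := by
    have := Real.add_one_le_exp (β * v / 2)
    linarith
  have h3 : (0:ℝ) ≤ 1 + β * v / 2 := by nlinarith
  have h4 : (1 + β * v / 2)^2 ≤ Real.exp (β * v / 2) ^ 2 := by
    apply pow_le_pow_left₀ h3 h2
  have h5 : 4 * (β * v / 2) ≤ (1 + β * v / 2)^2 := by nlinarith [sq_nonneg (1 - β * v / 2)]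
  nlinarith

variable {a : ℝ}

/-- (C0) -/
lemma gps_C0 (ha : 0 < a) (ha1 : a ≤ 1) (k : ℕ) (hk : 1 ≤ k) :
    a ≤ Real.exp (-(a * k) / Real.exp 1) + a * (a * Real.exp (-1)) * k := by
  have he : (0:ℝ) < Real.exp 1 := Real.exp_pos 1
  have hk1 : (1:ℝ) ≤ (k:ℝ) := by exact_mod_cast hk
  rw [neg_div]
  have hexp : 1 - a * k / Real.exp 1 ≤ Real.exp (-(a * k / Real.exp 1)) := by
    have := Real.add_one_le_exp (-(a * k / Real.exp 1))
    linarith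
  have h2 : a * (a * Real.exp (-1)) * k = a * (a * k / Real.exp 1) := by
    rw [Real.exp_neg]; field_simp
  rw [h2]
  rcases le_or_gt (a * (k:ℝ)) (Real.exp 1) with h | h
  · have h3 : a * k / Real.exp 1 ≤ 1 := by rw [div_le_one he]; linarith
    have h4 : 0 ≤ (1 - a) * (1 - a * k / Real.exp 1) := by
      apply mul_nonneg <;> linarith
    nlinarith [Real.exp_pos (-(a * k / Real.exp 1))]
  · have h3 : (1:ℝ) ≤ a * k / Real.exp 1 := by rw [le_div_iff₀ he]; linarith
    nlinarith [Real.exp_pos (-(a * k / Real.exp 1)),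
      mul_le_mul_of_nonneg_left h3 ha.le]

/-- (C1) -/
lemma gps_C1 (ha : 0 < a) (ha1 : a ≤ 1) (m' k : ℕ) (hk : m' + 1 ≤ k) :
    (1 - a) * ((a * Real.exp (-1)) * ((m':ℝ) + 1) * Real.exp (-1) ^ m')
      ≤ Real.exp (-(a * k) / Real.exp 1)
        + a * (((k:ℝ) - ((m':ℝ) + 1)) * ((a * Real.exp (-1)) * Real.exp (-1) ^ (m' + 1))) := by
  have he : (0:ℝ) < Real.exp 1 := Real.exp_pos 1
  have ht : (0:ℝ) < Real.exp (-1) := Real.exp_pos _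
  set t : ℝ := Real.exp (-1) with htdef
  set c : ℝ := a * t with hcdef
  have hc : 0 < c := mul_pos ha ht
  have htp : ∀ N : ℕ, t ^ N = Real.exp (-(N:ℝ)) := by
    intro N
    rw [htdef, ← Real.exp_nat_mul]
    ring_nf
  set m : ℝ := (m':ℝ) + 1 with hmdef
  clear_value t c m
  have hm1 : (1:ℝ) ≤ m := by
    rw [hmdef]
    have := Nat.cast_nonneg (α := ℝ) m'
    linarith
  have hkm : m ≤ (k:ℝ) := by
    have : ((m' + 1 : ℕ):ℝ) ≤ (k:ℝ) := by exact_mod_cast hk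
    push_cast at this; linarith
  rcases le_or_gt ((1-a) * m) (a * ((k:ℝ) - m) * t) with h | h
  · -- linear term dominates
    have h1 : (1-a) * (c * m * t ^ m') ≤ a * (((k:ℝ) - m) * (c * t ^ (m' + 1))) := by
      calc (1-a) * (c * m * t ^ m') = ((1-a) * m) * (c * t ^ m') := by ring
        _ ≤ (a * ((k:ℝ) - m) * t) * (c * t ^ m') := by
            apply mul_le_mul_of_nonneg_right h (by positivity)
        _ = a * (((k:ℝ) - m) * (c * t ^ (m' + 1))) := by rw [pow_succ]; ring
    have h2 : Real.exp (-(a*k)/Real.exp 1) > 0 := Real.exp_pos _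
    linarith
  · -- exponential term dominates
    have hinv : t = (Real.exp 1)⁻¹ := by rw [htdef]; exact Real.exp_neg 1
    have hke : a * k / Real.exp 1 ≤ a * m / Real.exp 1 + (1 - a) * m := by
      have h4 : a * ((k:ℝ) - m) < (1 - a) * m * Real.exp 1 := by
        rw [hinv] at h
        rw [mul_inv_lt_iff₀ he] at h
        linarith
      rw [div_le_iff₀ he]
      have h5 : (a * m / Real.exp 1) * Real.exp 1 = a * m := by field_simp
      have h6 : (a * m / Real.exp 1 + (1-a)*m) * Real.exp 1
          = (a * m / Real.exp 1) * Real.exp 1 + (1-a)*m*Real.exp 1 := by ring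
      have h7 : a * (k:ℝ) = a * m + a * ((k:ℝ) - m) := by ring
      linarith
    have hE : Real.exp (-(a * m / Real.exp 1 + (1-a)*m)) ≤ Real.exp (-(a*k)/Real.exp 1) := by
      apply Real.exp_le_exp.mpr
      rw [neg_div]
      linarith
    have hexpm : Real.exp (-1) * Real.exp (-(m':ℝ)) = Real.exp (-m) := by
      rw [← Real.exp_add]; congr 1; rw [hmdef]; ring
    have hLHS : (1 - a) * (c * m * t ^ m') = (1-a) * a * m * Real.exp (-m) := by
      rw [hcdef, htp m', htdef]
      linear_combination ((1-a) * a * m) * hexpm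
    have hkey : (1-a) * a * m * Real.exp (-m) ≤ Real.exp (-(a * m / Real.exp 1 + (1-a)*m)) := by
      have hv : 0 ≤ a * m := by positivity
      have h6 : a * m ≤ Real.exp ((1 - t) * (a * m)) := by rw [htdef]; exact gps_aux1 _ hv
      have h7 : (1-a) * a * m ≤ Real.exp ((1 - t) * (a * m)) := by nlinarith
      calc (1-a) * a * m * Real.exp (-m)
          ≤ Real.exp ((1 - t) * (a * m)) * Real.exp (-m) := by
            apply mul_le_mul_of_nonneg_right h7 (le_of_lt (Real.exp_pos _))
        _ = Real.exp ((1 - t) * (a * m) + -m) := (Real.exp_add _ _).symm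
        _ = Real.exp (-(a * m / Real.exp 1 + (1-a)*m)) := by
            congr 1
            rw [hinv]
            field_simp
            ring
    have h8 : 0 ≤ a * (((k:ℝ) - m) * (c * t ^ (m' + 1))) := by
      have h9 : (0:ℝ) ≤ (k:ℝ) - m := by linarith
      positivity
    have h10 : (1 - a) * (c * m * t ^ m') ≤ Real.exp (-(a*k)/Real.exp 1) := by
      rw [hLHS]; exact le_trans hkey hE
    calc (1 - a) * (c * m * t ^ m') ≤ Real.exp (-(a*k)/Real.exp 1) := h10
      _ ≤ _ := le_add_of_nonneg_right h8


/-- Expansion of `t^{#trues}` over subsets, via `prod_add`. -/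
lemma gps_expand {n : ℕ} (t : ℝ) (b : Fin n → Bool) (j : Fin n) :
    ∑ I ∈ ((univ : Finset (Fin n)).erase j).powerset,
        (1-t)^I.card * t^(((univ.erase j) \ I).card)
          * (if ∀ i ∈ I, b i = false then (1:ℝ) else 0)
      = t ^ (((univ : Finset (Fin n)).erase j).filter (fun i => b i = true)).card := by
  have h := Finset.prod_add (fun i => (1-t) * (if b i = false then (1:ℝ) else 0))
    (fun _ => t) ((univ : Finset (Fin n)).erase j)
  have hL : ∏ i ∈ (univ : Finset (Fin n)).erase j,
      ((1-t) * (if b i = false then (1:ℝ) else 0) + t)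
      = t ^ (((univ : Finset (Fin n)).erase j).filter (fun i => b i = true)).card := by
    rw [← Finset.prod_const, Finset.prod_filter]
    apply Finset.prod_congr rfl
    intro i _
    cases hbi : b i <;> simp [hbi]
  have hR : ∀ I ∈ ((univ : Finset (Fin n)).erase j).powerset,
      (∏ i ∈ I, (1-t) * (if b i = false then (1:ℝ) else 0))
          * ∏ _i ∈ (univ.erase j) \ I, t
        = (1-t)^I.card * t^(((univ.erase j) \ I).card)
          * (if ∀ i ∈ I, b i = false then (1:ℝ) else 0) := by
    intro I _
    rw [Finset.prod_mul_distrib, Finset.prod_const, Finset.prod_const]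
    by_cases hI : ∀ i ∈ I, b i = false
    · rw [if_pos hI]
      have : ∏ i ∈ I, (if b i = false then (1:ℝ) else 0) = 1 := by
        apply Finset.prod_eq_one
        intro i hi
        rw [if_pos (hI i hi)]
      rw [this]; ring
    · rw [if_neg hI]
      push_neg at hI
      obtain ⟨i, hi, hbi⟩ := hI
      have : ∏ i ∈ I, (if b i = false then (1:ℝ) else 0) = 0 :=
        Finset.prod_eq_zero hi (by rw [if_neg hbi])
      rw [this]; ring
  rw [hL] at h
  rw [h]
  exact (Finset.sum_congr rfl hR).symm

/-- The pointwise (per-`ω`) dual inequality. -/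
lemma gps_pointwise {n : ℕ} (a : ℝ) (ha : 0 < a) (ha1 : a ≤ 1) (xb yb : Fin n → Bool)
    (hle : ∀ i, yb i ≤ xb i) :
    (if 0 < ((univ : Finset (Fin n)).filter fun i => xb i = true).card
          ∧ ((univ : Finset (Fin n)).filter fun i => yb i = true).card = 0 then a else 0)
      + ∑ j, (if yb j = true then (1:ℝ) else 0)
          * (a * Real.exp (-1)
              * Real.exp (-1) ^ (((univ : Finset (Fin n)).erase j).filter
                  (fun i => yb i = true)).card)
    ≤ (if 0 < ((univ : Finset (Fin n)).filter fun i => xb i = true).card then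
          Real.exp (-(a * (((univ : Finset (Fin n)).filter fun i => xb i = true).card : ℝ))
            / Real.exp 1) else 0)
      + ∑ j, (if xb j = true then (1:ℝ) else 0)
          * (a * (a * Real.exp (-1)
              * Real.exp (-1) ^ (((univ : Finset (Fin n)).erase j).filter
                  (fun i => yb i = true)).card)) := by
  classical
  set t : ℝ := Real.exp (-1) with htdef
  have ht : 0 < t := Real.exp_pos _
  set O : Finset (Fin n) := univ.filter (fun i => yb i = true) with hO
  set P : Finset (Fin n) := univ.filter (fun i => xb i = true) with hP
  have hOP : O ⊆ P := by
    intro i hi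
    rw [hO, Finset.mem_filter] at hi
    rw [hP, Finset.mem_filter]
    refine ⟨hi.1, ?_⟩
    have h2 := hle i
    rw [hi.2] at h2
    cases hxb : xb i
    · rw [hxb] at h2
      exact absurd h2 (by decide)
    · rfl
  have hmk : O.card ≤ P.card := Finset.card_le_card hOP
  have hkey : ∀ j : Fin n, ((univ : Finset (Fin n)).erase j).filter (fun i => yb i = true)
      = O.erase j := by
    intro j
    ext i
    simp only [Finset.mem_filter, Finset.mem_erase, hO, Finset.mem_univ, true_and, and_true]
    try tauto
  -- evaluate the y-sum
  have hSy : ∑ j, (if yb j = true then (1:ℝ) else 0)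
      * (a * t * t ^ (((univ : Finset (Fin n)).erase j).filter (fun i => yb i = true)).card)
      = O.card * (a * t * t ^ (O.card - 1)) := by
    simp only [ite_mul, one_mul, zero_mul]
    rw [← Finset.sum_filter, ← hO]
    have h1 : ∀ j ∈ O, a * t * t ^ (((univ : Finset (Fin n)).erase j).filter
        (fun i => yb i = true)).card = a * t * t ^ (O.card - 1) := fun j hj => by
      rw [hkey j, Finset.card_erase_of_mem hj]
    rw [Finset.sum_congr rfl h1, Finset.sum_const, nsmul_eq_mul]
  -- evaluate the x-sum
  have hSx : ∑ j, (if xb j = true then (1:ℝ) else 0)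
      * (a * (a * t * t ^ (((univ : Finset (Fin n)).erase j).filter (fun i => yb i = true)).card))
      = ((P.card - O.card : ℕ) : ℝ) * (a * (a * t * t ^ O.card))
        + O.card * (a * (a * t * t ^ (O.card - 1))) := by
    simp only [ite_mul, one_mul, zero_mul]
    rw [← Finset.sum_filter, ← hP, ← Finset.sum_sdiff hOP]
    congr 1
    · have h1 : ∀ j ∈ P \ O, a * (a * t * t ^ (((univ : Finset (Fin n)).erase j).filter
          (fun i => yb i = true)).card) = a * (a * t * t ^ O.card) := fun j hj => by
        rw [hkey j, Finset.erase_eq_of_notMem (Finset.mem_sdiff.mp hj).2]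
      rw [Finset.sum_congr rfl h1, Finset.sum_const, nsmul_eq_mul, Finset.card_sdiff_of_subset hOP]
    · have h1 : ∀ j ∈ O, a * (a * t * t ^ (((univ : Finset (Fin n)).erase j).filter
          (fun i => yb i = true)).card) = a * (a * t * t ^ (O.card - 1)) := fun j hj => by
        rw [hkey j, Finset.card_erase_of_mem hj]
      rw [Finset.sum_congr rfl h1, Finset.sum_const, nsmul_eq_mul]
  rw [hSy, hSx]
  -- now case analysis
  rcases Nat.eq_zero_or_pos P.card with hk0 | hk
  · have hm0 : O.card = 0 := Nat.le_antisymm (hk0 ▸ hmk) (Nat.zero_le _)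
    rw [hk0, hm0]
    norm_num
  · rcases Nat.eq_zero_or_pos O.card with hm0 | hm
    · -- Y = 0 case : C0
      rw [hm0, if_pos ⟨hk, rfl⟩, if_pos hk]
      simp only [Nat.cast_zero, zero_mul, pow_zero, Nat.sub_zero, add_zero]
      have hc0 := gps_C0 ha ha1 P.card hk
      rw [htdef]
      nlinarith [hc0]
    · -- Y ≥ 1 : C1
      obtain ⟨m', hm'⟩ : ∃ m', O.card = m' + 1 := ⟨O.card - 1, (Nat.succ_pred_eq_of_pos hm).symm⟩
      rw [if_neg (by rw [hm']; rintro ⟨-, h⟩; exact Nat.succ_ne_zero _ h), if_pos hk]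
      have hC1 := gps_C1 ha ha1 m' P.card (hm' ▸ hmk)
      have hcast : ((P.card - O.card : ℕ) : ℝ) = (P.card : ℝ) - ((m':ℝ) + 1) := by
        rw [Nat.cast_sub hmk, hm']
        push_cast
        ring
      rw [hcast, hm']
      simp only [Nat.add_sub_cancel]
      push_cast
      rw [htdef]
      nlinarith [hC1]


/-- expansion of one indicator-weight term over subsets -/
lemma gps_term_expand {n : ℕ} (t r : ℝ) (b yb : Fin n → Bool) (j : Fin n) :
    (if b j = true then (1:ℝ) else 0)
        * (r * t ^ (((univ : Finset (Fin n)).erase j).filter (fun i => yb i = true)).card)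
      = ∑ I ∈ ((univ : Finset (Fin n)).erase j).powerset,
          (if (∀ i ∈ I, yb i = false) ∧ b j = true then
            r * ((1-t)^I.card * t^(((univ.erase j) \ I).card)) else 0) := by
  classical
  cases hbj : b j
  · simp only [Bool.false_eq_true, if_false, zero_mul]
    rw [Finset.sum_eq_zero]
    intro I _
    rw [if_neg (by rintro ⟨-, h⟩; exact absurd h (by simp [hbj]))]
  · rw [if_pos rfl, one_mul, ← gps_expand t yb j, Finset.mul_sum]
    apply Finset.sum_congr rfl
    intro I _
    by_cases hI : ∀ i ∈ I, yb i = false <;> simp [hI]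

lemma gps_ofReal_ite_indicator {Ω : Type*} (p : Prop) [Decidable p] (S : Set Ω) (ω : Ω)
    (h : ω ∈ S ↔ p) (s : ℝ) :
    ENNReal.ofReal (if p then s else 0) = S.indicator (fun _ => ENNReal.ofReal s) ω := by
  by_cases hp : p
  · rw [if_pos hp, Set.indicator_of_mem (h.mpr hp)]
  · rw [if_neg hp, Set.indicator_of_notMem (fun hm => hp (h.mp hm)), ENNReal.ofReal_zero]


end gps_aux

/-- Proposition 6.1 of Garban–Pete–Schramm: let `x, y : Ω → {0,1}ⁿ` (encoded with
booleans) with `y ≤ x` pointwise, `X = ∑ xᵢ`, `Y = ∑ yᵢ`. If for some `a ∈ (0,1]`, for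
every `j` and every `I ⊆ {1,…,n} ∖ {j}` one has
`P[y_j = 1 | y_i = 0 ∀ i ∈ I] ≥ a · P[x_j = 1 | y_i = 0 ∀ i ∈ I]`, then
`P[Y = 0 | X > 0] ≤ (1/a) · E[exp(-aX/e) | X > 0]`. -/
theorem gps_large_deviation {Ω : Type*} [MeasurableSpace Ω] (μ : Measure Ω)
    [IsProbabilityMeasure μ] (n : ℕ) (x y : Ω → Fin n → Bool)
    (hx : ∀ i, Measurable fun ω => x ω i) (hy : ∀ i, Measurable fun ω => y ω i)
    (hle : ∀ ω i, y ω i ≤ x ω i)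
    (a : ℝ) (ha : 0 < a) (ha1 : a ≤ 1)
    (hcond : ∀ (j : Fin n) (I : Finset (Fin n)), j ∉ I →
      ENNReal.ofReal a *
          (μ[|{ω | ∀ i ∈ I, y ω i = false}]) {ω | x ω j = true}
        ≤ (μ[|{ω | ∀ i ∈ I, y ω i = false}]) {ω | y ω j = true}) :
    (μ[|{ω | 0 < (Finset.univ.filter fun i => x ω i = true).card}])
        {ω | (Finset.univ.filter fun i => y ω i = true).card = 0}
      ≤ ENNReal.ofReal ((1 / a) *
          ∫ ω, Real.exp (-(a * ((Finset.univ.filter fun i => x ω i = true).card : ℝ))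
              / Real.exp 1)
            ∂(μ[|{ω | 0 < (Finset.univ.filter fun i => x ω i = true).card}])) := by
  classical
  -- abbreviations
  set t : ℝ := Real.exp (-1) with htdef
  have ht : 0 < t := Real.exp_pos _
  have ht1 : t ≤ 1 := by
    rw [htdef, Real.exp_neg]
    rw [inv_le_one_iff₀]
    right
    linarith [Real.add_one_le_exp (1:ℝ)]
  set c : ℝ := a * t with hcdef
  have hc : 0 < c := mul_pos ha ht
  set X : Ω → ℕ := fun ω => ((univ : Finset (Fin n)).filter fun i => x ω i = true).card with hX
  set Y : Ω → ℕ := fun ω => ((univ : Finset (Fin n)).filter fun i => y ω i = true).card with hY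
  set Yj : Fin n → Ω → ℕ :=
    fun j ω => (((univ : Finset (Fin n)).erase j).filter fun i => y ω i = true).card with hYj
  set Z : Finset (Fin n) → Set Ω := fun I => {ω | ∀ i ∈ I, y ω i = false} with hZ
  set wt : Fin n → Finset (Fin n) → ℝ :=
    fun j I => (1-t)^I.card * t^((((univ : Finset (Fin n)).erase j) \ I).card) with hwtdef
  have hwt : ∀ j I, 0 ≤ wt j I := fun j I => by
    rw [hwtdef]
    have : (0:ℝ) ≤ 1 - t := by linarith
    positivity
  set A : Set Ω := {ω | 0 < X ω} with hA
  set B : Set Ω := {ω | Y ω = 0} with hB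
  -- measurability
  have hmx : ∀ j, MeasurableSet {ω | x ω j = true} := fun j => hx j (measurableSet_singleton true)
  have hmy : ∀ j, MeasurableSet {ω | y ω j = true} := fun j => hy j (measurableSet_singleton true)
  have hmZ : ∀ I : Finset (Fin n), MeasurableSet (Z I) := by
    intro I
    have hset : Z I = ⋂ i ∈ (I : Set (Fin n)), {ω | y ω i = false} := by
      rw [hZ]; ext ω; simp
    rw [hset]
    exact MeasurableSet.biInter I.countable_toSet
      (fun i _ => hy i (measurableSet_singleton false))
  have hmX : Measurable X := by
    rw [hX]
    have : (fun ω => ((univ : Finset (Fin n)).filter fun i => x ω i = true).card)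
        = fun ω => ∑ i : Fin n, if x ω i = true then 1 else 0 := by
      funext ω; rw [Finset.card_filter]
    rw [this]
    exact Finset.measurable_sum _ (fun i _ => Measurable.ite (hmx i) measurable_const
      measurable_const)
  have hmY : Measurable Y := by
    rw [hY]
    have : (fun ω => ((univ : Finset (Fin n)).filter fun i => y ω i = true).card)
        = fun ω => ∑ i : Fin n, if y ω i = true then 1 else 0 := by
      funext ω; rw [Finset.card_filter]
    rw [this]
    exact Finset.measurable_sum _ (fun i _ => Measurable.ite (hmy i) measurable_const
      measurable_const)
  have hmA : MeasurableSet A := hmX (MeasurableSet.of_discrete (s := {k : ℕ | 0 < k}))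
  have hmB : MeasurableSet B := hmY (MeasurableSet.of_discrete (s := {k : ℕ | k = 0}))
  -- the unconditional form of the hypothesis
  have hcons : ∀ (j : Fin n) (I : Finset (Fin n)), j ∉ I →
      ENNReal.ofReal a * μ (Z I ∩ {ω | x ω j = true}) ≤ μ (Z I ∩ {ω | y ω j = true}) := by
    intro j I hj
    by_cases hZ0 : μ (Z I) = 0
    · have h1 : μ (Z I ∩ {ω | x ω j = true}) = 0 :=
        measure_mono_null Set.inter_subset_left hZ0
      have h2 : μ (Z I ∩ {ω | y ω j = true}) = 0 :=
        measure_mono_null Set.inter_subset_left hZ0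
      rw [h1, h2, mul_zero]
    · have h := hcond j I hj
      rw [cond_apply (hmZ I), cond_apply (hmZ I)] at h
      have hfin : μ (Z I) ≠ ⊤ := measure_ne_top μ _
      have h3 := mul_le_mul_right h (μ (Z I))
      have e1 : μ (Z I) * (ENNReal.ofReal a * ((μ (Z I))⁻¹ * μ (Z I ∩ {ω | x ω j = true})))
          = (μ (Z I) * (μ (Z I))⁻¹) * (ENNReal.ofReal a * μ (Z I ∩ {ω | x ω j = true})) := by
        ring
      have e2 : μ (Z I) * ((μ (Z I))⁻¹ * μ (Z I ∩ {ω | y ω j = true}))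
          = (μ (Z I) * (μ (Z I))⁻¹) * μ (Z I ∩ {ω | y ω j = true}) := by ring
      rw [e1, e2, ENNReal.mul_inv_cancel hZ0 hfin, one_mul, one_mul] at h3
      exact h3
  -- lintegral comparison via the pointwise inequality
  have hstar : ENNReal.ofReal a * μ (A ∩ B)
      ≤ ∫⁻ ω in A, ENNReal.ofReal (Real.exp (-(a * (X ω : ℝ)) / Real.exp 1)) ∂μ := by
    have hpw : ∀ ω, (if 0 < X ω ∧ Y ω = 0 then a else 0)
          + ∑ j, (if y ω j = true then (1:ℝ) else 0) * (c * t ^ Yj j ω)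
        ≤ (if 0 < X ω then Real.exp (-(a * (X ω : ℝ)) / Real.exp 1) else 0)
          + ∑ j, (if x ω j = true then (1:ℝ) else 0) * (a * (c * t ^ Yj j ω)) :=
      fun ω => gps_pointwise a ha ha1 (x ω) (y ω) (hle ω)
    have hnn : ∀ (P : Prop) [Decidable P] (s : ℝ), 0 ≤ s → 0 ≤ if P then s else 0 := by
      intro P _ s hs
      split_ifs
      · exact hs
      · exact le_rfl
    -- expansions over subsets (real level)
    have hexp1 : ∀ ω, (if 0 < X ω ∧ Y ω = 0 then a else 0)
          + ∑ j, (if y ω j = true then (1:ℝ) else 0) * (c * t ^ Yj j ω)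
        = (if 0 < X ω ∧ Y ω = 0 then a else 0)
          + ∑ j, ∑ I ∈ ((univ : Finset (Fin n)).erase j).powerset,
              (if (∀ i ∈ I, y ω i = false) ∧ y ω j = true then c * wt j I else 0) := by
      intro ω
      congr 1
      apply Finset.sum_congr rfl
      intro j _
      exact gps_term_expand t c (y ω) (y ω) j
    have hexp2 : ∀ ω, (if 0 < X ω then Real.exp (-(a * (X ω : ℝ)) / Real.exp 1) else 0)
          + ∑ j, (if x ω j = true then (1:ℝ) else 0) * (a * (c * t ^ Yj j ω))
        = (if 0 < X ω then Real.exp (-(a * (X ω : ℝ)) / Real.exp 1) else 0)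
          + ∑ j, ∑ I ∈ ((univ : Finset (Fin n)).erase j).powerset,
              (if (∀ i ∈ I, y ω i = false) ∧ x ω j = true then a * c * wt j I else 0) := by
      intro ω
      congr 1
      apply Finset.sum_congr rfl
      intro j _
      calc (if x ω j = true then (1:ℝ) else 0) * (a * (c * t ^ Yj j ω))
          = (if x ω j = true then (1:ℝ) else 0) * (a * c * t ^ Yj j ω) := by ring
        _ = _ := gps_term_expand t (a * c) (x ω) (y ω) j
    -- ENNReal indicator forms
    have hofReal1 : ∀ ω, ENNReal.ofReal ((if 0 < X ω ∧ Y ω = 0 then a else 0)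
          + ∑ j, (if y ω j = true then (1:ℝ) else 0) * (c * t ^ Yj j ω))
        = (A ∩ B).indicator (fun _ => ENNReal.ofReal a) ω
          + ∑ j, ∑ I ∈ ((univ : Finset (Fin n)).erase j).powerset,
              (Z I ∩ {ω' | y ω' j = true}).indicator
                (fun _ => ENNReal.ofReal (c * wt j I)) ω := by
      intro ω
      rw [hexp1 ω]
      rw [ENNReal.ofReal_add (hnn _ _ ha.le) (Finset.sum_nonneg (fun j _ =>
        Finset.sum_nonneg (fun I _ => hnn _ _ (mul_nonneg hc.le (hwt j I)))))]
      congr 1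
      · refine gps_ofReal_ite_indicator _ _ _ ?_ a
        rw [hA, hB]
        simp [Set.mem_inter_iff]
      · rw [ENNReal.ofReal_sum_of_nonneg (fun j _ => Finset.sum_nonneg (fun I _ =>
          hnn _ _ (mul_nonneg hc.le (hwt j I))))]
        apply Finset.sum_congr rfl
        intro j _
        rw [ENNReal.ofReal_sum_of_nonneg (fun I _ => hnn _ _ (mul_nonneg hc.le (hwt j I)))]
        apply Finset.sum_congr rfl
        intro I _
        refine gps_ofReal_ite_indicator _ _ _ ?_ _
        rw [hZ]
        simp [Set.mem_inter_iff]
    have hofReal2 : ∀ ω, ENNReal.ofReal ((if 0 < X ω then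
            Real.exp (-(a * (X ω : ℝ)) / Real.exp 1) else 0)
          + ∑ j, (if x ω j = true then (1:ℝ) else 0) * (a * (c * t ^ Yj j ω)))
        = A.indicator (fun ω' => ENNReal.ofReal (Real.exp (-(a * (X ω' : ℝ)) / Real.exp 1))) ω
          + ∑ j, ∑ I ∈ ((univ : Finset (Fin n)).erase j).powerset,
              (Z I ∩ {ω' | x ω' j = true}).indicator
                (fun _ => ENNReal.ofReal (a * c * wt j I)) ω := by
      intro ω
      rw [hexp2 ω]
      rw [ENNReal.ofReal_add (hnn _ _ (Real.exp_pos _).le) (Finset.sum_nonneg (fun j _ =>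
        Finset.sum_nonneg (fun I _ => hnn _ _
          (mul_nonneg (mul_nonneg ha.le hc.le) (hwt j I)))))]
      congr 1
      · by_cases hωA : 0 < X ω
        · rw [Set.indicator_of_mem (show ω ∈ A from hωA), if_pos hωA]
        · rw [Set.indicator_of_notMem (show ω ∉ A from hωA), if_neg hωA, ENNReal.ofReal_zero]
      · rw [ENNReal.ofReal_sum_of_nonneg (fun j _ => Finset.sum_nonneg (fun I _ =>
          hnn _ _ (mul_nonneg (mul_nonneg ha.le hc.le) (hwt j I))))]
        apply Finset.sum_congr rfl
        intro j _
        rw [ENNReal.ofReal_sum_of_nonneg (fun I _ =>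
          hnn _ _ (mul_nonneg (mul_nonneg ha.le hc.le) (hwt j I)))]
        apply Finset.sum_congr rfl
        intro I _
        refine gps_ofReal_ite_indicator _ _ _ ?_ _
        rw [hZ]
        simp [Set.mem_inter_iff]
    -- measurability of the indicator pieces
    have hmexp : Measurable (fun ω => ENNReal.ofReal
        (Real.exp (-(a * (X ω : ℝ)) / Real.exp 1))) := by
      have hd : Measurable (fun k : ℕ =>
          ENNReal.ofReal (Real.exp (-(a * (k:ℝ)) / Real.exp 1))) := Measurable.of_discrete
      exact hd.comp hmX
    -- lintegral of side 1
    have hli1 : ∫⁻ ω, ((A ∩ B).indicator (fun _ => ENNReal.ofReal a) ω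
          + ∑ j, ∑ I ∈ ((univ : Finset (Fin n)).erase j).powerset,
              (Z I ∩ {ω' | y ω' j = true}).indicator
                (fun _ => ENNReal.ofReal (c * wt j I)) ω) ∂μ
        = ENNReal.ofReal a * μ (A ∩ B)
          + ∑ j, ∑ I ∈ ((univ : Finset (Fin n)).erase j).powerset,
              ENNReal.ofReal (c * wt j I) * μ (Z I ∩ {ω' | y ω' j = true}) := by
      rw [lintegral_add_left (measurable_const.indicator (hmA.inter hmB))]
      congr 1
      · exact lintegral_indicator_const (hmA.inter hmB) _
      · rw [lintegral_finset_sum' _ (fun j _ => (Finset.measurable_sum _ (fun I _ =>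
          measurable_const.indicator ((hmZ I).inter (hmy j)))).aemeasurable)]
        apply Finset.sum_congr rfl
        intro j _
        rw [lintegral_finset_sum' _ (fun I _ =>
          (measurable_const.indicator ((hmZ I).inter (hmy j))).aemeasurable)]
        apply Finset.sum_congr rfl
        intro I _
        exact lintegral_indicator_const ((hmZ I).inter (hmy j)) _
    -- lintegral of side 2
    have hli2 : ∫⁻ ω, (A.indicator
            (fun ω' => ENNReal.ofReal (Real.exp (-(a * (X ω' : ℝ)) / Real.exp 1))) ω
          + ∑ j, ∑ I ∈ ((univ : Finset (Fin n)).erase j).powerset,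
              (Z I ∩ {ω' | x ω' j = true}).indicator
                (fun _ => ENNReal.ofReal (a * c * wt j I)) ω) ∂μ
        = (∫⁻ ω in A, ENNReal.ofReal (Real.exp (-(a * (X ω : ℝ)) / Real.exp 1)) ∂μ)
          + ∑ j, ∑ I ∈ ((univ : Finset (Fin n)).erase j).powerset,
              ENNReal.ofReal (a * c * wt j I) * μ (Z I ∩ {ω' | x ω' j = true}) := by
      rw [lintegral_add_left (hmexp.indicator hmA)]
      congr 1
      · exact lintegral_indicator hmA _
      · rw [lintegral_finset_sum' _ (fun j _ => (Finset.measurable_sum _ (fun I _ =>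
          measurable_const.indicator ((hmZ I).inter (hmx j)))).aemeasurable)]
        apply Finset.sum_congr rfl
        intro j _
        rw [lintegral_finset_sum' _ (fun I _ =>
          (measurable_const.indicator ((hmZ I).inter (hmx j))).aemeasurable)]
        apply Finset.sum_congr rfl
        intro I _
        exact lintegral_indicator_const ((hmZ I).inter (hmx j)) _
    -- compare the two lintegrals
    have hcomp : ENNReal.ofReal a * μ (A ∩ B)
          + ∑ j, ∑ I ∈ ((univ : Finset (Fin n)).erase j).powerset,
              ENNReal.ofReal (c * wt j I) * μ (Z I ∩ {ω' | y ω' j = true})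
        ≤ (∫⁻ ω in A, ENNReal.ofReal (Real.exp (-(a * (X ω : ℝ)) / Real.exp 1)) ∂μ)
          + ∑ j, ∑ I ∈ ((univ : Finset (Fin n)).erase j).powerset,
              ENNReal.ofReal (a * c * wt j I) * μ (Z I ∩ {ω' | x ω' j = true}) := by
      rw [← hli1, ← hli2]
      apply lintegral_mono
      intro ω
      exact le_trans (le_of_eq (hofReal1 ω).symm)
        (le_trans (ENNReal.ofReal_le_ofReal (hpw ω)) (le_of_eq (hofReal2 ω)))
    -- bound the x-side double sum by the y-side one
    have hxy : ∑ j, ∑ I ∈ ((univ : Finset (Fin n)).erase j).powerset,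
          ENNReal.ofReal (a * c * wt j I) * μ (Z I ∩ {ω' | x ω' j = true})
        ≤ ∑ j, ∑ I ∈ ((univ : Finset (Fin n)).erase j).powerset,
          ENNReal.ofReal (c * wt j I) * μ (Z I ∩ {ω' | y ω' j = true}) := by
      apply Finset.sum_le_sum
      intro j _
      apply Finset.sum_le_sum
      intro I hI
      have hjI : j ∉ I := fun hj =>
        Finset.notMem_erase j univ ((Finset.mem_powerset.mp hI) hj)
      calc ENNReal.ofReal (a * c * wt j I) * μ (Z I ∩ {ω' | x ω' j = true})
          = ENNReal.ofReal (c * wt j I)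
              * (ENNReal.ofReal a * μ (Z I ∩ {ω' | x ω' j = true})) := by
            rw [show a * c * wt j I = a * (c * wt j I) by ring,
              ENNReal.ofReal_mul ha.le]
            ring
        _ ≤ ENNReal.ofReal (c * wt j I) * μ (Z I ∩ {ω' | y ω' j = true}) :=
            mul_le_mul_right (hcons j I hjI) _
    -- cancel the finite y-side sum
    have hfin : ∑ j, ∑ I ∈ ((univ : Finset (Fin n)).erase j).powerset,
        ENNReal.ofReal (c * wt j I) * μ (Z I ∩ {ω' | y ω' j = true}) ≠ ⊤ := by
      refine (ENNReal.sum_lt_top.mpr (fun j _ => ENNReal.sum_lt_top.mpr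
        (fun I _ => ?_))).ne
      exact ENNReal.mul_lt_top ENNReal.ofReal_lt_top (measure_lt_top μ _)
    have hchain := le_trans hcomp (add_le_add_right hxy _)
    exact (ENNReal.add_le_add_iff_right hfin).mp hchain
  -- final bookkeeping
  by_cases hA0 : μ A = 0
  · have h1 : μ (A ∩ B) = 0 := measure_mono_null Set.inter_subset_left hA0
    rw [cond_apply hmA, h1, mul_zero]
    exact zero_le
  · set f : Ω → ℝ := fun ω => Real.exp (-(a * (X ω : ℝ)) / Real.exp 1) with hf
    have hfm : Measurable f := by
      have hd : Measurable (fun k : ℕ => Real.exp (-(a * (k:ℝ)) / Real.exp 1)) :=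
        Measurable.of_discrete
      exact hd.comp hmX
    have hfnn : ∀ ω, 0 ≤ f ω := fun ω => (Real.exp_pos _).le
    have hfle : ∀ ω, f ω ≤ 1 := by
      intro ω
      rw [hf]
      apply Real.exp_le_one_iff.mpr
      rw [div_nonpos_iff]
      right
      constructor
      · have h1 : (0:ℝ) ≤ a * (X ω : ℝ) := by positivity
        linarith
      · exact (Real.exp_pos 1).le
    have hint : Integrable f (μ.restrict A) := by
      apply Integrable.mono' (integrable_const (1:ℝ)) hfm.aestronglyMeasurable
      filter_upwards with ω
      rw [Real.norm_eq_abs, abs_of_nonneg (hfnn ω)]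
      exact hfle ω
    have hT : ENNReal.ofReal (∫ ω, f ω ∂(μ.restrict A))
        = ∫⁻ ω in A, ENNReal.ofReal (f ω) ∂μ :=
      ofReal_integral_eq_lintegral_ofReal hint (Filter.Eventually.of_forall hfnn)
    have hr0 : 0 ≤ ∫ ω, f ω ∂(μ.restrict A) := integral_nonneg hfnn
    have hcondeq : μ[|A] = (μ A)⁻¹ • μ.restrict A := rfl
    have hcondint : ∫ ω, f ω ∂(μ[|A]) = ((μ A)⁻¹).toReal * ∫ ω, f ω ∂(μ.restrict A) := by
      rw [hcondeq, integral_smul_measure, smul_eq_mul]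
    have key2 : μ (A ∩ B) ≤ ENNReal.ofReal (1/a)
        * ENNReal.ofReal (∫ ω, f ω ∂(μ.restrict A)) := by
      have h2 : μ (A ∩ B) = (ENNReal.ofReal a)⁻¹ * (ENNReal.ofReal a * μ (A ∩ B)) := by
        rw [← mul_assoc, ENNReal.inv_mul_cancel (ENNReal.ofReal_pos.mpr ha).ne'
          ENNReal.ofReal_ne_top, one_mul]
      calc μ (A ∩ B) = (ENNReal.ofReal a)⁻¹ * (ENNReal.ofReal a * μ (A ∩ B)) := h2
        _ ≤ (ENNReal.ofReal a)⁻¹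
            * ∫⁻ ω in A, ENNReal.ofReal (Real.exp (-(a * (X ω : ℝ)) / Real.exp 1)) ∂μ :=
            mul_le_mul_right hstar _
        _ = ENNReal.ofReal (1/a) * ENNReal.ofReal (∫ ω, f ω ∂(μ.restrict A)) := by
            rw [hT, one_div, ENNReal.ofReal_inv_of_pos ha]
    rw [cond_apply hmA, hcondint]
    rw [ENNReal.ofReal_mul (by positivity), ENNReal.ofReal_mul ENNReal.toReal_nonneg]
    rw [ENNReal.ofReal_toReal (ENNReal.inv_ne_top.mpr hA0)]
    calc (μ A)⁻¹ * μ (A ∩ B)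
        ≤ (μ A)⁻¹ * (ENNReal.ofReal (1/a)
            * ENNReal.ofReal (∫ ω, f ω ∂(μ.restrict A))) := mul_le_mul_right key2 _
      _ = ENNReal.ofReal (1/a) * ((μ A)⁻¹
            * ENNReal.ofReal (∫ ω, f ω ∂(μ.restrict A))) := by ring
end
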